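/- Fix κ ≥ 0 and α > 0, and assume that B is strictly decreasing on [0,1). Define f(r) = A(r) - α·B(P(r)) for r ≥ 0. Then f is strictly increasing on (0,∞), f(0) = -α·E(κ)² < 0, and consequently the system q = P(r), r = (α/(1-q)²)·B(q) admits at most one solution (q, r) ∈ [0,1) × [0,∞). -/

import Mathlib

open MeasureTheory Real Filter

/-- The standard normal density. -/
noncomputable def gphi (u : ℝ) : ℝ := Real.exp (-u ^ 2 / 2) / Real.sqrt (2 * Real.pi)

/-- The standard normal CDF. -/
noncomputable def gPhi (u : ℝ) : ℝ := ∫ s in Set.Iic u, gphi s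

/-- The standard normal tail. -/
noncomputable def gPhiBar (u : ℝ) : ℝ := 1 - gPhi u

/-- The inverse Mills ratio. -/
noncomputable def mills (u : ℝ) : ℝ := gphi u / gPhiBar u

/-- P(r) = E[tanh²(√r Z)]. -/
noncomputable def Pfun (r : ℝ) : ℝ := ∫ z : ℝ, Real.tanh (Real.sqrt r * z) ^ 2 * gphi z

/-- B(q). -/
noncomputable def Bfun (κ q : ℝ) : ℝ :=
  (1 - q) * ∫ z : ℝ, mills ((κ - Real.sqrt q * z) / Real.sqrt (1 - q)) ^ 2 * gphi z

/-- C_κ. -/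
noncomputable def Ckappa (κ : ℝ) : ℝ := ∫ z : ℝ, max (κ - z) 0 ^ 2 * gphi z

/-- The critical capacity. -/
noncomputable def alphac (κ : ℝ) : ℝ := 2 / (Real.pi * Ckappa κ)

/-- A(r) = r (1 - P(r))². -/
noncomputable def Afun (r : ℝ) : ℝ := r * (1 - Pfun r) ^ 2

lemma my_tanh_eq (x : ℝ) : Real.tanh x = 1 - 2 / (Real.exp (2*x) + 1) := by
  rw [Real.tanh_eq_sinh_div_cosh, Real.sinh_eq, Real.cosh_eq]
  have h1 : Real.exp x > 0 := Real.exp_pos x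
  have h2 : Real.exp (2*x) = Real.exp x * Real.exp x := by
    rw [two_mul, Real.exp_add]
  have h3 : Real.exp (-x) = (Real.exp x)⁻¹ := Real.exp_neg x
  rw [h2, h3]
  have h4 : Real.exp x * Real.exp x + 1 > 0 := by positivity
  field_simp
  ring

lemma my_tanh_strictMono : StrictMono Real.tanh := by
  intro x y hxy
  rw [my_tanh_eq, my_tanh_eq]
  have h1 : (0:ℝ) < Real.exp (2*x) + 1 := by positivity
  have h2 : Real.exp (2*x) + 1 < Real.exp (2*y) + 1 := by
    have := Real.exp_lt_exp.2 (by linarith : 2*x < 2*y); linarith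
  have := div_lt_div_of_pos_left (by norm_num : (0:ℝ) < 2) h1 h2
  linarith

lemma my_tanh_lt_one (x : ℝ) : Real.tanh x < 1 := by
  rw [my_tanh_eq]
  have h1 : (0:ℝ) < Real.exp (2*x) + 1 := by positivity
  have : 0 < 2 / (Real.exp (2*x) + 1) := by positivity
  linarith

lemma my_neg_one_lt_tanh (x : ℝ) : -1 < Real.tanh x := by
  rw [my_tanh_eq]
  have h1 : (1:ℝ) < Real.exp (2*x) + 1 := by nlinarith [Real.exp_pos (2*x)]
  have : 2 / (Real.exp (2*x) + 1) < 2 := by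
    rw [div_lt_iff₀ (by linarith)]; nlinarith
  linarith

lemma my_tanh_sq_lt_one (x : ℝ) : Real.tanh x ^ 2 < 1 := by
  have h1 := my_tanh_lt_one x
  have h2 := my_neg_one_lt_tanh x
  nlinarith

lemma my_tanh_nonneg {x : ℝ} (hx : 0 ≤ x) : 0 ≤ Real.tanh x := by
  have := my_tanh_strictMono.monotone hx
  rwa [Real.tanh_zero] at this

lemma my_continuous_tanh : Continuous Real.tanh := by
  have : Continuous fun x : ℝ => Real.sinh x / Real.cosh x :=
    Real.continuous_sinh.div Real.continuous_cosh fun x => (Real.cosh_pos x).ne'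
  exact this.congr fun x => (Real.tanh_eq_sinh_div_cosh x).symm

lemma my_hasDerivAt_tanh (x : ℝ) : HasDerivAt Real.tanh (1 - Real.tanh x ^ 2) x := by
  have h := (Real.hasDerivAt_sinh x).div (Real.hasDerivAt_cosh x) (Real.cosh_pos x).ne'
  have heq : (Real.cosh x * Real.cosh x - Real.sinh x * Real.sinh x) / Real.cosh x ^ 2
      = 1 - Real.tanh x ^ 2 := by
    rw [Real.tanh_eq_sinh_div_cosh, div_pow]
    have h1 : Real.cosh x ^ 2 ≠ 0 := by positivity
    field_simp
  rw [heq] at h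
  exact h.congr_deriv rfl |>.congr_of_eventuallyEq (by
    filter_upwards with y; rw [Real.tanh_eq_sinh_div_cosh]; rfl)


lemma gphi_pos (u : ℝ) : 0 < gphi u := by
  unfold gphi
  have : (0:ℝ) < Real.sqrt (2 * Real.pi) := Real.sqrt_pos.2 (by positivity)
  positivity

lemma gphi_eq (u : ℝ) : gphi u = Real.exp (-(1/2 : ℝ) * u ^ 2) / Real.sqrt (2 * Real.pi) := by
  unfold gphi; ring_nf

lemma continuous_gphi : Continuous gphi := by
  unfold gphi
  exact (Real.continuous_exp.comp (by continuity)).div_const _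

lemma integrable_gphi : Integrable gphi := by
  have : Integrable fun u : ℝ => Real.exp (-(1/2:ℝ) * u ^ 2) / Real.sqrt (2 * Real.pi) :=
    (integrable_exp_neg_mul_sq (by norm_num)).div_const _
  exact this.congr (Eventually.of_forall fun u => (gphi_eq u).symm)

lemma integral_gphi : ∫ z : ℝ, gphi z = 1 := by
  have h : ∫ z : ℝ, Real.exp (-(1/2:ℝ) * z ^ 2) = Real.sqrt (Real.pi / (1/2)) :=
    integral_gaussian _
  have h2 : Real.pi / (1/2 : ℝ) = 2 * Real.pi := by ring
  have h3 : (0:ℝ) < Real.sqrt (2 * Real.pi) := Real.sqrt_pos.2 (by positivity)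
  calc ∫ z : ℝ, gphi z = (∫ z : ℝ, Real.exp (-(1/2:ℝ) * z ^ 2)) / Real.sqrt (2 * Real.pi) := by
        simp_rw [gphi_eq]; exact integral_div _ _
    _ = 1 := by rw [h, h2, div_self h3.ne']

lemma integrable_abs_mul_gphi : Integrable (fun z : ℝ => |z| * gphi z) := by
  have : Integrable fun z : ℝ => z * Real.exp (-(1/2:ℝ) * z ^ 2) :=
    integrable_mul_exp_neg_mul_sq (by norm_num)
  refine (this.abs.div_const (Real.sqrt (2 * Real.pi))).congr
    (Eventually.of_forall fun z => ?_)
  show |z * Real.exp (-(1/2:ℝ) * z ^ 2)| / Real.sqrt (2 * Real.pi) = |z| * gphi z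
  rw [gphi_eq, abs_mul, abs_of_pos (Real.exp_pos _)]
  ring

lemma gphi_tendsto_atTop : Tendsto gphi atTop (nhds 0) := by
  have h : Tendsto (fun u : ℝ => -u ^ 2 / 2) atTop atBot := by
    apply Tendsto.atBot_div_const (by norm_num)
    exact tendsto_neg_atBot_iff.2 (tendsto_pow_atTop (by norm_num))
  have h2 := (Real.tendsto_exp_atBot.comp h).div_const (Real.sqrt (2 * Real.pi))
  rw [zero_div] at h2
  exact h2.congr fun u => rfl

lemma gphi_tendsto_atBot : Tendsto gphi atBot (nhds 0) := by
  have h : Tendsto (fun u : ℝ => -u ^ 2 / 2) atBot atBot := by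
    have h2 := (tendsto_pow_atTop (n := 2) (by norm_num : 2 ≠ 0)).comp
      (tendsto_neg_atBot_atTop (G := ℝ))
    have h3 : Tendsto (fun u : ℝ => u ^ 2) atBot atTop :=
      h2.congr fun u => by simp [Function.comp, neg_pow]
    have h4 : Tendsto (fun u : ℝ => -u ^ 2) atBot atBot := tendsto_neg_atBot_iff.2 h3
    exact h4.atBot_div_const (by norm_num)
  have h2 := (Real.tendsto_exp_atBot.comp h).div_const (Real.sqrt (2 * Real.pi))
  rw [zero_div] at h2
  exact h2.congr fun u => rfl


lemma tanh_sq_mono {s₁ s₂ : ℝ} (h0 : 0 ≤ s₁) (h12 : s₁ ≤ s₂) (z : ℝ) :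
    Real.tanh (s₁ * z) ^ 2 ≤ Real.tanh (s₂ * z) ^ 2 := by
  have key : ∀ w : ℝ, 0 ≤ w → Real.tanh (s₁ * w) ^ 2 ≤ Real.tanh (s₂ * w) ^ 2 := by
    intro w hw
    have h1 : s₁ * w ≤ s₂ * w := mul_le_mul_of_nonneg_right h12 hw
    have h2 : 0 ≤ Real.tanh (s₁ * w) := my_tanh_nonneg (mul_nonneg h0 hw)
    have h3 := my_tanh_strictMono.monotone h1
    exact pow_le_pow_left₀ h2 h3 2
  rcases le_or_gt 0 z with hz | hz
  · exact key z hz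
  · have e1 : Real.tanh (s₁ * z) ^ 2 = Real.tanh (s₁ * (-z)) ^ 2 := by
      rw [mul_neg, Real.tanh_neg, neg_sq]
    have e2 : Real.tanh (s₂ * z) ^ 2 = Real.tanh (s₂ * (-z)) ^ 2 := by
      rw [mul_neg, Real.tanh_neg, neg_sq]
    rw [e1, e2]; exact key (-z) (by linarith)

lemma mul_tanh_mono {s₁ s₂ : ℝ} (h0 : 0 ≤ s₁) (h12 : s₁ ≤ s₂) (z : ℝ) :
    z * Real.tanh (s₁ * z) ≤ z * Real.tanh (s₂ * z) := by
  rcases le_or_gt 0 z with hz | hz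
  · exact mul_le_mul_of_nonneg_left
      (my_tanh_strictMono.monotone (mul_le_mul_of_nonneg_right h12 hz)) hz
  · have h1 : s₂ * z ≤ s₁ * z := mul_le_mul_of_nonpos_right h12 hz.le
    have h2 := my_tanh_strictMono.monotone h1
    nlinarith

lemma mul_tanh_strict {s₁ s₂ : ℝ} (h0 : 0 ≤ s₁) (h12 : s₁ < s₂) {z : ℝ} (hz : z ≠ 0) :
    z * Real.tanh (s₁ * z) < z * Real.tanh (s₂ * z) := by
  rcases lt_or_gt_of_ne hz with hz | hz
  · have h1 : s₂ * z < s₁ * z := mul_lt_mul_of_neg_right h12 hz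
    have h2 := my_tanh_strictMono h1
    nlinarith
  · have h1 : s₁ * z < s₂ * z := mul_lt_mul_of_pos_right h12 hz
    have h2 := my_tanh_strictMono h1
    nlinarith

lemma integrable_tanhsq_gphi (s : ℝ) :
    Integrable fun z : ℝ => Real.tanh (s * z) ^ 2 * gphi z := by
  refine integrable_gphi.bdd_mul (c := 1) ?_ (Eventually.of_forall fun z => ?_)
  · exact ((my_continuous_tanh.comp (continuous_const.mul continuous_id)).pow 2).aestronglyMeasurable
  · rw [Real.norm_eq_abs, abs_of_nonneg (sq_nonneg _)]
    exact (my_tanh_sq_lt_one _).le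

lemma integrable_one_sub_tanhsq_gphi (s : ℝ) :
    Integrable fun z : ℝ => (1 - Real.tanh (s * z) ^ 2) * gphi z := by
  have h := integrable_gphi.sub (integrable_tanhsq_gphi s)
  exact h.congr (Eventually.of_forall fun z => by
    show gphi z - Real.tanh (s * z) ^ 2 * gphi z = _; ring)

lemma integrable_mul_tanh_gphi (s : ℝ) :
    Integrable fun z : ℝ => z * Real.tanh (s * z) * gphi z := by
  refine integrable_abs_mul_gphi.mono ?_ (Eventually.of_forall fun z => ?_)
  · exact ((continuous_id.mul (my_continuous_tanh.comp (continuous_const.mul continuous_id))).mul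
      continuous_gphi).aestronglyMeasurable
  · rw [Real.norm_eq_abs, Real.norm_eq_abs, abs_mul, abs_mul,
      abs_of_pos (gphi_pos z), abs_of_nonneg (mul_nonneg (abs_nonneg z) (gphi_pos z).le)]
    have h1 : |Real.tanh (s * z)| ≤ 1 := by
      have := my_tanh_lt_one (s*z); have := my_neg_one_lt_tanh (s*z)
      rw [abs_le]; constructor <;> linarith
    have h2 := mul_le_mul_of_nonneg_right
      (mul_le_mul_of_nonneg_left h1 (abs_nonneg z)) (gphi_pos z).le
    simpa using h2

lemma Pfun_nonneg (r : ℝ) : 0 ≤ Pfun r :=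
  integral_nonneg fun z => mul_nonneg (sq_nonneg _) (gphi_pos z).le

lemma Pfun_mono : Monotone Pfun := by
  intro r₁ r₂ h
  refine integral_mono (integrable_tanhsq_gphi _) (integrable_tanhsq_gphi _) fun z => ?_
  exact mul_le_mul_of_nonneg_right
    (tanh_sq_mono (Real.sqrt_nonneg r₁) (Real.sqrt_le_sqrt h) z) (gphi_pos z).le

lemma one_sub_integral (s : ℝ) :
    ∫ z : ℝ, (1 - Real.tanh (s * z) ^ 2) * gphi z
      = 1 - ∫ z : ℝ, Real.tanh (s * z) ^ 2 * gphi z := by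
  have h : (fun z : ℝ => (1 - Real.tanh (s * z) ^ 2) * gphi z)
      = fun z => gphi z - Real.tanh (s * z) ^ 2 * gphi z := by funext z; ring
  rw [h, integral_sub integrable_gphi (integrable_tanhsq_gphi s), integral_gphi]

lemma Pfun_lt_one (r : ℝ) : Pfun r < 1 := by
  have key : 0 < ∫ z : ℝ, (1 - Real.tanh (Real.sqrt r * z) ^ 2) * gphi z := by
    rw [integral_pos_iff_support_of_nonneg
      (fun z => mul_nonneg (by nlinarith [my_tanh_sq_lt_one (Real.sqrt r * z)]) (gphi_pos z).le)
      (integrable_one_sub_tanhsq_gphi _)]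
    have hsupp : Set.Ioi (0:ℝ) ⊆ Function.support
        (fun z : ℝ => (1 - Real.tanh (Real.sqrt r * z) ^ 2) * gphi z) := by
      intro z _
      have h1 := my_tanh_sq_lt_one (Real.sqrt r * z)
      have h2 := gphi_pos z
      simp only [Function.mem_support]
      have h3 : 0 < (1 - Real.tanh (Real.sqrt r * z) ^ 2) * gphi z := by nlinarith
      exact h3.ne'
    refine lt_of_lt_of_le (by simp : (0:ENNReal) < ⊤) ?_
    rw [← Real.volume_Ioi (a := 0)]
    exact measure_mono hsupp
  rw [one_sub_integral] at key
  unfold Pfun; linarith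

lemma Pfun_zero : Pfun 0 = 0 := by
  unfold Pfun; simp [Real.sqrt_zero, Real.tanh_zero]

lemma hasDerivAt_gphi (z : ℝ) : HasDerivAt gphi (-z * gphi z) z := by
  have h1 : HasDerivAt (fun z : ℝ => -z ^ 2 / 2) (-z) z := by
    have := ((hasDerivAt_pow 2 z).neg).div_const 2
    exact this.congr_deriv (by push_cast; ring)
  have h2 := (Real.hasDerivAt_exp (-z ^ 2 / 2)).comp z h1
  have h3 := h2.div_const (Real.sqrt (2 * Real.pi))
  unfold gphi
  exact h3.congr_deriv (by ring)

lemma ibp (s : ℝ) :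
    ∫ z : ℝ, z * Real.tanh (s * z) * gphi z
      = s * ∫ z : ℝ, (1 - Real.tanh (s * z) ^ 2) * gphi z := by
  set G : ℝ → ℝ := fun z => Real.tanh (s * z) * gphi z with hG
  set D : ℝ → ℝ := fun z => s * ((1 - Real.tanh (s * z) ^ 2) * gphi z)
      - z * Real.tanh (s * z) * gphi z with hD
  have hGd : ∀ z : ℝ, HasDerivAt G (D z) z := by
    intro z
    have h1 : HasDerivAt (fun z : ℝ => Real.tanh (s * z)) ((1 - Real.tanh (s * z) ^ 2) * s) z :=
      by have := (my_hasDerivAt_tanh (s * z)).comp z ((hasDerivAt_id z).const_mul s); simp at this; exact this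
    have h2 := h1.mul (hasDerivAt_gphi z)
    exact h2.congr_deriv (by simp only [hD]; ring)
  have hDint : Integrable D :=
    ((integrable_one_sub_tanhsq_gphi s).const_mul s).sub (integrable_mul_tanh_gphi s)
  have hGtop : Tendsto G atTop (nhds 0) := by
    apply squeeze_zero_norm _ gphi_tendsto_atTop
    intro x
    rw [Real.norm_eq_abs, abs_mul, abs_of_pos (gphi_pos x)]
    have h1 : |Real.tanh (s * x)| ≤ 1 := by
      have := my_tanh_lt_one (s*x); have := my_neg_one_lt_tanh (s*x)
      rw [abs_le]; constructor <;> linarith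
    nlinarith [gphi_pos x, abs_nonneg (Real.tanh (s*x))]
  have hGbot : Tendsto G atBot (nhds 0) := by
    apply squeeze_zero_norm _ gphi_tendsto_atBot
    intro x
    rw [Real.norm_eq_abs, abs_mul, abs_of_pos (gphi_pos x)]
    have h1 : |Real.tanh (s * x)| ≤ 1 := by
      have := my_tanh_lt_one (s*x); have := my_neg_one_lt_tanh (s*x)
      rw [abs_le]; constructor <;> linarith
    nlinarith [gphi_pos x, abs_nonneg (Real.tanh (s*x))]
  have key : ∀ n : ℕ, ∫ z in (-(n:ℝ))..(n:ℝ), D z = G n - G (-(n:ℝ)) := fun n =>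
    intervalIntegral.integral_eq_sub_of_hasDerivAt (fun x _ => hGd x) hDint.intervalIntegrable
  have lim1 : Tendsto (fun n : ℕ => ∫ z in (-(n:ℝ))..(n:ℝ), D z) atTop (nhds (∫ z : ℝ, D z)) :=
    intervalIntegral_tendsto_integral hDint
      (tendsto_neg_atBot_iff.2 tendsto_natCast_atTop_atTop) tendsto_natCast_atTop_atTop
  have lim2 : Tendsto (fun n : ℕ => ∫ z in (-(n:ℝ))..(n:ℝ), D z) atTop (nhds 0) := by
    simp only [key]
    have h1 := (hGtop.comp tendsto_natCast_atTop_atTop).sub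
      (hGbot.comp (tendsto_neg_atBot_iff.2 tendsto_natCast_atTop_atTop))
    simpa using h1
  have hD0 : ∫ z : ℝ, D z = 0 := tendsto_nhds_unique lim1 lim2
  have hsplit : ∫ z : ℝ, D z
      = s * (∫ z : ℝ, (1 - Real.tanh (s * z) ^ 2) * gphi z)
        - ∫ z : ℝ, z * Real.tanh (s * z) * gphi z := by
    rw [hD]
    rw [integral_sub ((integrable_one_sub_tanhsq_gphi s).const_mul s) (integrable_mul_tanh_gphi s),
      MeasureTheory.integral_const_mul]
  rw [hsplit] at hD0
  linarith

noncomputable def hfun (r : ℝ) : ℝ := ∫ z : ℝ, z * Real.tanh (Real.sqrt r * z) * gphi z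

lemma hfun_eq (r : ℝ) : hfun r = Real.sqrt r * (1 - Pfun r) := by
  unfold hfun Pfun
  rw [ibp, one_sub_integral]

lemma hfun_zero : hfun 0 = 0 := by rw [hfun_eq]; simp

lemma hfun_strict {r₁ r₂ : ℝ} (h0 : 0 ≤ r₁) (h : r₁ < r₂) : hfun r₁ < hfun r₂ := by
  have hs : Real.sqrt r₁ < Real.sqrt r₂ := Real.sqrt_lt_sqrt h0 h
  have hs0 : 0 ≤ Real.sqrt r₁ := Real.sqrt_nonneg _
  have key : 0 < ∫ z : ℝ, (z * Real.tanh (Real.sqrt r₂ * z) * gphi z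
      - z * Real.tanh (Real.sqrt r₁ * z) * gphi z) := by
    rw [integral_pos_iff_support_of_nonneg
      (fun z => sub_nonneg.2 (mul_le_mul_of_nonneg_right (mul_tanh_mono hs0 hs.le z)
        (gphi_pos z).le))
      ((integrable_mul_tanh_gphi _).sub (integrable_mul_tanh_gphi _))]
    have hsupp : Set.Ioi (0:ℝ) ⊆ Function.support
        (fun z : ℝ => z * Real.tanh (Real.sqrt r₂ * z) * gphi z
          - z * Real.tanh (Real.sqrt r₁ * z) * gphi z) := by
      intro z hz
      have h1 := mul_tanh_strict hs0 hs (ne_of_gt (Set.mem_Ioi.1 hz))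
      have h2 := gphi_pos z
      simp only [Function.mem_support]
      have h3 : 0 < z * Real.tanh (Real.sqrt r₂ * z) * gphi z
          - z * Real.tanh (Real.sqrt r₁ * z) * gphi z := by nlinarith
      exact h3.ne'
    refine lt_of_lt_of_le (by simp : (0:ENNReal) < ⊤) ?_
    rw [← Real.volume_Ioi (a := 0)]
    exact measure_mono hsupp
  rw [integral_sub (integrable_mul_tanh_gphi _) (integrable_mul_tanh_gphi _)] at key
  unfold hfun
  linarith

lemma hfun_pos {r : ℝ} (hr : 0 < r) : 0 < hfun r := hfun_zero ▸ hfun_strict le_rfl hr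

lemma Afun_eq {r : ℝ} (hr : 0 ≤ r) : Afun r = hfun r ^ 2 := by
  rw [hfun_eq]; unfold Afun; rw [mul_pow, Real.sq_sqrt hr]

lemma Afun_strict {r₁ r₂ : ℝ} (h0 : 0 < r₁) (h : r₁ < r₂) : Afun r₁ < Afun r₂ := by
  rw [Afun_eq h0.le, Afun_eq (h0.trans h).le]
  have h1 := hfun_pos h0
  have h2 := hfun_strict h0.le h
  nlinarith

lemma gPhiBar_pos (u : ℝ) : 0 < gPhiBar u := by
  unfold gPhiBar gPhi
  have h1 : (∫ s in Set.Iic u, gphi s) + ∫ s in Set.Ioi u, gphi s = ∫ s : ℝ, gphi s :=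
    intervalIntegral.integral_Iic_add_Ioi integrable_gphi.integrableOn integrable_gphi.integrableOn
  have h2 : 0 < ∫ s in Set.Ioi u, gphi s := by
    rw [setIntegral_pos_iff_support_of_nonneg_ae
      (Eventually.of_forall fun x => (gphi_pos x).le) integrable_gphi.integrableOn]
    have h3 : Function.support gphi ∩ Set.Ioi u = Set.Ioi u := by
      rw [Set.inter_eq_right]; intro x _; exact (gphi_pos x).ne'
    rw [h3, Real.volume_Ioi]; simp
  rw [integral_gphi] at h1
  linarith

lemma mills_pos (u : ℝ) : 0 < mills u := div_pos (gphi_pos u) (gPhiBar_pos u)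

lemma Bfun_zero (κ : ℝ) : Bfun κ 0 = mills κ ^ 2 := by
  unfold Bfun
  simp only [Real.sqrt_zero, zero_mul, sub_zero, Real.sqrt_one, div_one, one_mul]
  rw [MeasureTheory.integral_const_mul, integral_gphi, mul_one]

lemma Afun_zero : Afun 0 = 0 := by unfold Afun; ring


theorem stmt_9 (κ : ℝ) (hκ : 0 ≤ κ) (α : ℝ) (hα : 0 < α)
    (hB : StrictAntiOn (Bfun κ) (Set.Ico (0 : ℝ) 1)) :
    StrictMonoOn (fun r => Afun r - α * Bfun κ (Pfun r)) (Set.Ioi (0 : ℝ)) ∧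
    Afun 0 - α * Bfun κ (Pfun 0) = -(α * mills κ ^ 2) ∧
    Afun 0 - α * Bfun κ (Pfun 0) < 0 ∧
    (∀ p₁ p₂ : ℝ × ℝ,
      (p₁.1 ∈ Set.Ico (0 : ℝ) 1 ∧ 0 ≤ p₁.2 ∧ p₁.1 = Pfun p₁.2 ∧
        p₁.2 = α / (1 - p₁.1) ^ 2 * Bfun κ p₁.1) →
      (p₂.1 ∈ Set.Ico (0 : ℝ) 1 ∧ 0 ≤ p₂.2 ∧ p₂.1 = Pfun p₂.2 ∧
        p₂.2 = α / (1 - p₂.1) ^ 2 * Bfun κ p₂.1) →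
      p₁ = p₂) := by
  have hmono : StrictMonoOn (fun r => Afun r - α * Bfun κ (Pfun r)) (Set.Ioi (0 : ℝ)) := by
    intro r₁ h₁ r₂ h₂ h12
    have h₁' : (0:ℝ) < r₁ := h₁
    have hA := Afun_strict h₁' h12
    have hPmem : ∀ r : ℝ, Pfun r ∈ Set.Ico (0:ℝ) 1 := fun r => ⟨Pfun_nonneg r, Pfun_lt_one r⟩
    have hBle : Bfun κ (Pfun r₂) ≤ Bfun κ (Pfun r₁) := by
      rcases eq_or_lt_of_le (Pfun_mono h12.le) with he | hl
      · rw [he]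
      · exact (hB (hPmem r₁) (hPmem r₂) hl).le
    have := mul_le_mul_of_nonneg_left hBle hα.le
    simp only
    linarith
  have hval : Afun 0 - α * Bfun κ (Pfun 0) = -(α * mills κ ^ 2) := by
    rw [Afun_zero, Pfun_zero, Bfun_zero]; ring
  have hneg : Afun 0 - α * Bfun κ (Pfun 0) < 0 := by
    rw [hval]
    have := mills_pos κ
    have h2 : 0 < α * mills κ ^ 2 := by positivity
    linarith
  refine ⟨hmono, hval, hneg, ?_⟩
  intro p₁ p₂ ⟨hq₁, hr₁, hPq₁, heq₁⟩ ⟨hq₂, hr₂, hPq₂, heq₂⟩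
  have hroot : ∀ q r : ℝ, q ∈ Set.Ico (0:ℝ) 1 → 0 ≤ r → q = Pfun r →
      r = α / (1 - q) ^ 2 * Bfun κ q → 0 < r ∧ Afun r - α * Bfun κ (Pfun r) = 0 := by
    intro q r hq hr hPq heq
    have hq1 : (1:ℝ) - q ≠ 0 := by have := hq.2; intro h; linarith [sub_eq_zero.1 h]
    have hrpos : 0 < r := by
      rcases eq_or_lt_of_le hr with he | hl
      · exfalso
        have hq0 : q = 0 := by rw [hPq, ← he, Pfun_zero]
        rw [hq0, Bfun_zero] at heq
        rw [← he] at heq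
        have hm := mills_pos κ
        have : α / (1 - 0) ^ 2 * mills κ ^ 2 > 0 := by positivity
        linarith [heq]
      · exact hl
    refine ⟨hrpos, ?_⟩
    have hA : Afun r = r * (1 - q) ^ 2 := by unfold Afun; rw [← hPq]
    rw [hA, ← hPq, heq]
    field_simp
    ring
  obtain ⟨hrpos₁, hf₁⟩ := hroot p₁.1 p₁.2 hq₁ hr₁ hPq₁ heq₁
  obtain ⟨hrpos₂, hf₂⟩ := hroot p₂.1 p₂.2 hq₂ hr₂ hPq₂ heq₂
  have hre : p₁.2 = p₂.2 := by
    have := hmono.injOn (Set.mem_Ioi.2 hrpos₁) (Set.mem_Ioi.2 hrpos₂)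
      (by show Afun p₁.2 - α * Bfun κ (Pfun p₁.2) = Afun p₂.2 - α * Bfun κ (Pfun p₂.2)
          rw [hf₁, hf₂])
    exact this
  have hqe : p₁.1 = p₂.1 := by rw [hPq₁, hPq₂, hre]
  exact Prod.ext hqe hre
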